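/- Let (λ, φ, γ) be a nonnegative linear representation of π : A* → ℝ and suppose γ' ∈ ℝ^n is a nonnegative vector with M γ' = γ' (where M = Σ_a φ(a)) and λ φ(w) γ' = λ φ(w) γ for all w. If γ' has all entries positive and D is the diagonal matrix with D_{ii} = γ'_i, then the triple (λD, ψ, D^{-1}γ') with ψ(w) = D^{-1} φ(w) D is an equivalent nonnegative representation of π in which Σ_a ψ(a) is stochastic and D^{-1}γ' is the all-ones vector. -/
import Mathlib


open Matrix

theorem diagonal_conjugation_stochastic
    (A : Type*) [Fintype A] (n : ℕ)
    (l γ γ' : Fin n → ℝ) (φ : A → Matrix (Fin n) (Fin n) ℝ)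
    (π : List A → ℝ)
    (hπ : ∀ w : List A, π w = l ᵥ* (w.map φ).prod ⬝ᵥ γ)
    (hl0 : ∀ i, 0 ≤ l i) (hγ0 : ∀ i, 0 ≤ γ i)
    (hφ0 : ∀ (a : A) i j, 0 ≤ φ a i j)
    (hγ' : ∀ i, 0 < γ' i)
    (hfix : (∑ a, φ a) *ᵥ γ' = γ')
    (heq : ∀ w : List A, l ᵥ* (w.map φ).prod ⬝ᵥ γ' = l ᵥ* (w.map φ).prod ⬝ᵥ γ) :
    let D : Matrix (Fin n) (Fin n) ℝ := Matrix.diagonal γ'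
    let Dinv : Matrix (Fin n) (Fin n) ℝ := Matrix.diagonal fun i => (γ' i)⁻¹
    let ψ : A → Matrix (Fin n) (Fin n) ℝ := fun a => Dinv * φ a * D
    (∀ w : List A, (l ᵥ* D) ᵥ* (w.map ψ).prod ⬝ᵥ (Dinv *ᵥ γ') = π w) ∧
    (∀ (a : A) i j, 0 ≤ ψ a i j) ∧
    (∀ i j, 0 ≤ (∑ a, ψ a) i j) ∧
    (∀ i, ∑ j, (∑ a, ψ a) i j = 1) ∧
    (Dinv *ᵥ γ') = fun _ => (1 : ℝ) := by
  intro D Dinv ψ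
  have hne : ∀ i, γ' i ≠ 0 := fun i => (hγ' i).ne'
  have hDD : D * Dinv = 1 := by
    simp [D, Dinv, diagonal_mul_diagonal, mul_inv_cancel₀, hne, Matrix.diagonal_one]
  have hDD' : Dinv * D = 1 := by
    simp [D, Dinv, diagonal_mul_diagonal, inv_mul_cancel₀, hne, Matrix.diagonal_one]
  have hprod : ∀ w : List A, (w.map ψ).prod = Dinv * (w.map φ).prod * D := by
    intro w
    induction w with
    | nil => simp only [List.map_nil, List.prod_nil, mul_one, hDD']
    | cons a t ih =>
        simp only [List.map_cons, List.prod_cons, ih, ψ]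
        simp only [mul_assoc]
        rw [← mul_assoc D Dinv, hDD, one_mul]
  have hψ0 : ∀ (a : A) (i j : Fin n), 0 ≤ ψ a i j := by
    intro a i j
    simp only [ψ, Dinv, D, diagonal_mul, mul_diagonal]
    exact mul_nonneg (mul_nonneg (inv_nonneg.2 (hγ' i).le) (hφ0 a i j)) (hγ' j).le
  refine ⟨?_, hψ0, ?_, ?_, ?_⟩
  · intro w
    rw [hprod, hπ, ← heq]
    rw [Matrix.dotProduct_mulVec, Matrix.vecMul_vecMul, Matrix.vecMul_vecMul]
    congr 2
    simp only [← mul_assoc]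
    rw [hDD, one_mul, mul_assoc, hDD, mul_one]
  · intro i j
    rw [Matrix.sum_apply]
    exact Finset.sum_nonneg fun a _ => hψ0 a i j
  · intro i
    have hM : ∑ j, (∑ a, φ a) i j * γ' j = γ' i := by
      have := congrFun hfix i
      simpa [Matrix.mulVec, dotProduct] using this
    have : ∀ j, (∑ a, ψ a) i j = (γ' i)⁻¹ * ((∑ a, φ a) i j * γ' j) := by
      intro j
      simp only [Matrix.sum_apply, ψ, Dinv, D, diagonal_mul, mul_diagonal,
        Finset.sum_mul, Finset.mul_sum, mul_assoc]
    simp_rw [this]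
    rw [← Finset.mul_sum, hM, inv_mul_cancel₀ (hne i)]
  · funext i
    simp [Dinv, Matrix.mulVec, dotProduct, diagonal_apply, inv_mul_cancel₀ (hne i),
      Finset.sum_ite_eq, Finset.mem_univ]
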